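/- If a graph G on n vertices satisfies: (a) every vertex subset S with |S| ≤ n/(d·m) has external neighborhood of size at least d|S|, and (b) any two disjoint vertex subsets of size at least n/(4130·m) are joined by an edge (for some parameters d ≥ 2 and m ≥ 1 with n/(d·m) ≥ 1), then G is connected. -/

import Mathlib

open Finset

/-- The external neighborhood of a finite vertex set `S`: vertices outside `S`
with a neighbor in `S`. -/
def extNbhd {V : Type*} [Fintype V] [DecidableEq V] (G : SimpleGraph V)
    [DecidableRel G.Adj] (S : Finset V) : Finset V :=
  Finset.univ.filter fun v => v ∉ S ∧ ∃ u ∈ S, G.Adj u v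

/-- If a graph `G` on `n` vertices satisfies P1 (every set of size at most `n/(d·m)`
expands by a factor of `d`) and P2 (any two disjoint sets of size at least
`n/(4130·m)` are joined by an edge), with `d ≥ 2`, `m ≥ 1`, `n/(d·m) ≥ 1`,
then `G` is connected. -/
theorem stmt0 {V : Type*} [Fintype V] [DecidableEq V] (G : SimpleGraph V)
    [DecidableRel G.Adj] (n : ℕ) (hn : Fintype.card V = n)
    (d m : ℝ) (hd : 2 ≤ d) (hm : 1 ≤ m) (hdm : 1 ≤ (n : ℝ) / (d * m))
    (hP1 : ∀ S : Finset V, (S.card : ℝ) ≤ (n : ℝ) / (d * m) →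
      d * S.card ≤ ((extNbhd G S).card : ℝ))
    (hP2 : ∀ A B : Finset V, Disjoint A B → (n : ℝ) / (4130 * m) ≤ A.card →
      (n : ℝ) / (4130 * m) ≤ B.card → ∃ a ∈ A, ∃ b ∈ B, G.Adj a b) :
    G.Connected := by
  classical
  have hd0 : (0:ℝ) < d := by linarith
  have hm0 : (0:ℝ) < m := by linarith
  have hdm1 : (1:ℝ) ≤ d * m := by nlinarith
  have hn1 : (1:ℝ) ≤ (n:ℝ) := le_trans hdm (div_le_self (by positivity) hdm1)
  -- the component of a vertex
  set C : V → Finset V := fun v => univ.filter (fun w => G.Reachable v w) with hC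
  have memC : ∀ v w, w ∈ C v ↔ G.Reachable v w := by
    intro v w; simp [hC]
  have closed : ∀ v u w, u ∈ C v → G.Adj u w → w ∈ C v := by
    intro v u w hu ha
    exact (memC v w).2 (((memC v u).1 hu).trans ha.reachable)
  have hext : ∀ v (S : Finset V), S ⊆ C v → extNbhd G S ⊆ C v \ S := by
    intro v S hS w hw
    simp only [extNbhd, mem_filter, mem_univ, true_and] at hw
    obtain ⟨hwS, u, hu, ha⟩ := hw
    exact mem_sdiff.2 ⟨closed v u w (hS hu) ha, hwS⟩
  have hextC : ∀ v, extNbhd G (C v) = ∅ := by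
    intro v
    have := hext v (C v) le_rfl
    rw [sdiff_self] at this
    exact subset_empty.mp (by simpa using this)
  -- every component is bigger than n/(d*m)
  have hA : ∀ v, (n:ℝ) / (d * m) < ((C v).card : ℝ) := by
    intro v
    by_contra h
    push_neg at h
    have h1 := hP1 (C v) h
    rw [hextC v] at h1
    simp only [card_empty, Nat.cast_zero] at h1
    have hv : v ∈ C v := (memC v v).2 (SimpleGraph.Reachable.refl v)
    have : (1:ℝ) ≤ (C v).card := by exact_mod_cast card_pos.mpr ⟨v, hv⟩
    nlinarith
  -- every component has size ≥ n/(4130*m)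
  have hB : ∀ v, (n:ℝ) / (4130 * m) ≤ ((C v).card : ℝ) := by
    intro v
    set x : ℝ := (n:ℝ) / (d * m) with hx
    set k : ℕ := ⌊x⌋₊ with hk
    have hk1 : (1:ℝ) ≤ (k:ℝ) := by
      have : (1:ℕ) ≤ k := Nat.le_floor (by simpa using hdm)
      exact_mod_cast this
    have hkx : (k:ℝ) ≤ x := Nat.floor_le (by positivity)
    have hkC : k ≤ (C v).card := by
      have : (k:ℝ) ≤ ((C v).card : ℝ) := le_of_lt (lt_of_le_of_lt hkx (hA v))
      exact_mod_cast this
    obtain ⟨S, hSsub, hScard⟩ := Finset.exists_subset_card_eq hkC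
    have hSexp : d * (S.card : ℝ) ≤ ((extNbhd G S).card : ℝ) :=
      hP1 S (by rw [hScard]; exact hkx)
    have hdisj : Disjoint S (extNbhd G S) := by
      rw [Finset.disjoint_right]
      intro w hw
      simp only [extNbhd, mem_filter, mem_univ, true_and] at hw
      exact hw.1
    have hsub : S ∪ extNbhd G S ⊆ C v :=
      union_subset hSsub ((hext v S hSsub).trans (sdiff_subset))
    have hcard : S.card + (extNbhd G S).card ≤ (C v).card := by
      rw [← card_union_of_disjoint hdisj]
      exact card_le_card hsub
    have hcardR : (k:ℝ) + d * k ≤ ((C v).card : ℝ) := by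
      have : ((S.card + (extNbhd G S).card : ℕ) : ℝ) ≤ ((C v).card : ℝ) := by
        exact_mod_cast hcard
      push_cast at this
      rw [hScard] at this hSexp
      linarith
    -- k ≥ x/2
    have hfl : x - 1 < (k:ℝ) := Nat.sub_one_lt_floor x
    have hk2 : x / 2 ≤ (k:ℝ) := by linarith
    -- d * x = n / m
    have hdx : d * x = (n:ℝ) / m := by
      rw [hx]; field_simp
    have h2m : (n:ℝ) / (2 * m) ≤ ((C v).card : ℝ) := by
      have h1 : (n:ℝ) / (2 * m) = (n/m) / 2 := by ring
      have hx0 : 0 ≤ x := by positivity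
      nlinarith
    have hmono : (n:ℝ) / (4130 * m) ≤ (n:ℝ) / (2 * m) := by
      apply div_le_div_of_nonneg_left (by linarith) (by linarith)
      linarith
    linarith
  -- conclude connectivity
  have hne : Nonempty V := by
    rw [← Fintype.card_pos_iff, hn]
    exact_mod_cast lt_of_lt_of_le zero_lt_one hn1
  rw [SimpleGraph.connected_iff]
  refine ⟨?_, hne⟩
  intro u v
  by_contra hnr
  have hdisj : Disjoint (C u) (C v) := by
    rw [Finset.disjoint_left]
    intro w hwu hwv
    exact hnr (((memC u w).1 hwu).trans ((memC v w).1 hwv).symm)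
  obtain ⟨a, ha, b, hb, hab⟩ := hP2 (C u) (C v) hdisj (hB u) (hB v)
  have : G.Reachable u v :=
    ((((memC u a).1 ha).trans hab.reachable)).trans ((memC v b).1 hb).symm
  exact hnr this
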